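/- Let n = v ⊕ z be a generalized Heisenberg algebra with dim z ≥ 2, ξ ∈ v a unit vector, Jξ = {J_Z ξ : Z ∈ z}, and (Jξ)^⊥ = v ⊖ (ℝξ ⊕ Jξ). If [Jξ, (Jξ)^⊥] = 0, then Jξ is not an abelian subspace, i.e. there exist W, W' ∈ Jξ with [W, W'] ≠ 0. -/

import Mathlib

open RealInnerProductSpace

/-- In a generalized Heisenberg algebra `n = v ⊕ z` with `dim z ≥ 2` and unit `ξ ∈ v`,
if `[Jξ, (Jξ)^⊥] = 0` then `Jξ` is not abelian. -/
theorem generalized_heisenberg_Jxi_not_abelian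
    {V : Type*} [NormedAddCommGroup V] [InnerProductSpace ℝ V] [FiniteDimensional ℝ V]
    (v z : Submodule ℝ V)
    (b J : V →ₗ[ℝ] V →ₗ[ℝ] V)
    (horth : ∀ U ∈ v, ∀ Z ∈ z, ⟪U, Z⟫ = 0)
    (hsum : v ⊔ z = ⊤)
    (hskew : ∀ X : V, b X X = 0)
    (hvv : ∀ U ∈ v, ∀ W ∈ v, b U W ∈ z)
    (hcent : ∀ X : V, ∀ Z ∈ z, b X Z = 0)
    (hJv : ∀ Z ∈ z, ∀ U ∈ v, J Z U ∈ v)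
    (hJdef : ∀ Z ∈ z, ∀ U ∈ v, ∀ W ∈ v, ⟪J Z U, W⟫ = ⟪b U W, Z⟫)
    (hJ2 : ∀ Z ∈ z, ∀ U ∈ v, J Z (J Z U) = (-⟪Z, Z⟫) • U)
    (hdim : 2 ≤ Module.finrank ℝ z)
    (ξ : V) (hξv : ξ ∈ v) (hξ : ‖ξ‖ = 1)
    (hcomm : ∀ W ∈ Submodule.span ℝ {x : V | ∃ Z ∈ z, J Z ξ = x},
             ∀ U ∈ v ⊓ ((ℝ ∙ ξ) ⊔ Submodule.span ℝ {x : V | ∃ Z ∈ z, J Z ξ = x})ᗮ,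
             b W U = 0) :
    ∃ W ∈ Submodule.span ℝ {x : V | ∃ Z ∈ z, J Z ξ = x},
      ∃ W' ∈ Submodule.span ℝ {x : V | ∃ Z ∈ z, J Z ξ = x}, b W W' ≠ 0 := by
  classical
  by_contra hcon
  push_neg at hcon
  set S : Set V := {x : V | ∃ Z ∈ z, J Z ξ = x} with hSdef
  -- b is skew
  have hbskew : ∀ X Y : V, b X Y = - b Y X := by
    intro X Y
    have h := hskew (X + Y)
    simp only [map_add, LinearMap.add_apply, hskew X, hskew Y, zero_add, add_zero] at h
    rw [add_comm] at h
    exact eq_neg_of_add_eq_zero_left h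
  -- J Z is skew-adjoint on v
  have hJskew : ∀ Z ∈ z, ∀ U ∈ v, ∀ W ∈ v, ⟪J Z U, W⟫ = -⟪J Z W, U⟫ := by
    intro Z hZ U hU W hW
    rw [hJdef Z hZ U hU W hW, hJdef Z hZ W hW U hU, hbskew U W, inner_neg_left]
  -- norm identity
  have hJnorm : ∀ Z ∈ z, ∀ U ∈ v, ⟪J Z U, J Z U⟫ = ⟪Z, Z⟫ * ⟪U, U⟫ := by
    intro Z hZ U hU
    rw [hJskew Z hZ U hU (J Z U) (hJv Z hZ U hU), hJ2 Z hZ U hU, real_inner_smul_left]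
    ring
  -- pick orthonormal Z, Z' in z
  let B := stdOrthonormalBasis ℝ z
  have h0 : (0 : ℕ) < Module.finrank ℝ z := by omega
  have h1 : (1 : ℕ) < Module.finrank ℝ z := by omega
  set Z : V := ((B ⟨0, h0⟩ : z) : V) with hZdef
  set Z' : V := ((B ⟨1, h1⟩ : z) : V) with hZ'def
  have hZ : Z ∈ z := (B ⟨0, h0⟩).2
  have hZ' : Z' ∈ z := (B ⟨1, h1⟩).2
  have hon := B.orthonormal
  rw [orthonormal_iff_ite] at hon
  have hZZ : ⟪Z, Z⟫ = 1 := by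
    have := hon ⟨0, h0⟩ ⟨0, h0⟩
    rw [if_pos rfl] at this; exact this
  have hZ'Z' : ⟪Z', Z'⟫ = 1 := by
    have := hon ⟨1, h1⟩ ⟨1, h1⟩
    rw [if_pos rfl] at this; exact this
  have hZZ' : ⟪Z, Z'⟫ = 0 := by
    have := hon ⟨0, h0⟩ ⟨1, h1⟩
    rw [if_neg (by simp [Fin.ext_iff])] at this; exact this
  -- anticommutation
  have h2 : ⟪Z + Z', Z + Z'⟫ = ⟪Z, Z⟫ + ⟪Z', Z'⟫ := by
    rw [real_inner_add_add_self, hZZ']; ring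
  have hanti : J Z (J Z' ξ) = - J Z' (J Z ξ) := by
    have expand : J Z (J Z' ξ) + J Z' (J Z ξ)
        = J (Z + Z') (J (Z + Z') ξ) - J Z (J Z ξ) - J Z' (J Z' ξ) := by
      simp only [map_add, LinearMap.add_apply]; abel
    rw [hJ2 (Z + Z') (z.add_mem hZ hZ') ξ hξv, hJ2 Z hZ ξ hξv, hJ2 Z' hZ' ξ hξv, h2] at expand
    have h3 : J Z (J Z' ξ) + J Z' (J Z ξ) = 0 := by
      rw [expand, neg_add, add_smul, neg_smul, neg_smul]; abel
    exact eq_neg_of_add_eq_zero_left h3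
  have huv : J Z' ξ ∈ v := hJv Z' hZ' ξ hξv
  have hJZξv : J Z ξ ∈ v := hJv Z hZ ξ hξv
  have hWv : J Z (J Z' ξ) ∈ v := hJv Z hZ _ huv
  have huS : J Z' ξ ∈ Submodule.span ℝ S := Submodule.subset_span ⟨Z', hZ', rfl⟩
  -- ⟪J Z ξ, J Z' ξ⟫ = 0
  have e1 : ⟪J Z ξ, J Z' ξ⟫ = -⟪J Z (J Z' ξ), ξ⟫ := hJskew Z hZ ξ hξv _ huv
  have e2 : ⟪J Z' (J Z ξ), ξ⟫ = -⟪J Z' ξ, J Z ξ⟫ := hJskew Z' hZ' _ hJZξv ξ hξv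
  have hmix : ⟪J Z ξ, J Z' ξ⟫ = 0 := by
    have e4 : ⟪J Z ξ, J Z' ξ⟫ = -⟪J Z' ξ, J Z ξ⟫ := by
      rw [e1, hanti, inner_neg_left, neg_neg, e2]
    have e5 := real_inner_comm (J Z ξ) (J Z' ξ)
    linarith
  have hWξ : ⟪J Z (J Z' ξ), ξ⟫ = 0 := by
    rw [e1] at hmix; linarith
  -- W ⊥ Jξ
  have hWJ : ∀ Z'' ∈ z, ⟪J Z (J Z' ξ), J Z'' ξ⟫ = 0 := by
    intro Z'' hZ''
    rw [hJdef Z hZ _ huv (J Z'' ξ) (hJv Z'' hZ'' ξ hξv),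
      hcon _ huS (J Z'' ξ) (Submodule.subset_span ⟨Z'', hZ'', rfl⟩), inner_zero_left]
  -- W ∈ ((ℝ∙ξ) ⊔ span S)ᗮ
  have hWorth : J Z (J Z' ξ) ∈ ((ℝ ∙ ξ) ⊔ Submodule.span ℝ S)ᗮ := by
    rw [Submodule.mem_orthogonal]
    intro y hy
    obtain ⟨a, ha, c, hc, rfl⟩ := Submodule.mem_sup.1 hy
    obtain ⟨r, rfl⟩ := Submodule.mem_span_singleton.1 ha
    have hcW : ⟪c, J Z (J Z' ξ)⟫ = 0 := by
      clear hy
      induction hc using Submodule.span_induction with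
      | mem x hx =>
        obtain ⟨Z'', hZ'', rfl⟩ := hx
        rw [real_inner_comm]; exact hWJ Z'' hZ''
      | zero => simp
      | add p q _ _ hp hq => rw [inner_add_left, hp, hq]; ring
      | smul t p _ hp => rw [real_inner_smul_left, hp]; ring
    have hξW : ⟪ξ, J Z (J Z' ξ)⟫ = 0 := by rw [real_inner_comm]; exact hWξ
    rw [inner_add_left, real_inner_smul_left, hξW, hcW]
    ring
  -- conclude : b (J Z ξ) W = 0, hence ⟪W, W⟫ = 0
  have hbW : b (J Z ξ) (J Z (J Z' ξ)) = 0 :=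
    hcomm (J Z ξ) (Submodule.subset_span ⟨Z, hZ, rfl⟩) _ ⟨hWv, hWorth⟩
  have hWW0 : ⟪J Z (J Z' ξ), J Z (J Z' ξ)⟫ = 0 := by
    have e : ⟪J Z' (J Z ξ), J Z (J Z' ξ)⟫ = ⟪b (J Z ξ) (J Z (J Z' ξ)), Z'⟫ :=
      hJdef Z' hZ' (J Z ξ) hJZξv _ hWv
    rw [hbW, inner_zero_left] at e
    have e5 : J Z' (J Z ξ) = -(J Z (J Z' ξ)) := by rw [hanti, neg_neg]
    rw [e5, inner_neg_left, neg_eq_zero] at e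
    exact e
  -- but ⟪W, W⟫ = 1
  have hξξ : ⟪ξ, ξ⟫ = 1 := by
    rw [real_inner_self_eq_norm_sq, hξ]; norm_num
  have hWW1 : ⟪J Z (J Z' ξ), J Z (J Z' ξ)⟫ = 1 := by
    rw [hJnorm Z hZ _ huv, hZZ, hJnorm Z' hZ' ξ hξv, hZ'Z', hξξ]
    ring
  rw [hWW0] at hWW1
  exact zero_ne_one hWW1
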